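/- A finite direct sum G = G_1 ⊕ ... ⊕ G_n of abelian groups is w-divisible if and only if there exists an index i with |G_i| = |G| and G_i w-divisible. -/

import Mathlib

/-- The subgroup `nG = {n • g : g ∈ G}` of an abelian group `G`. -/
def nsmulRange (n : ℕ) (G : Type) [AddCommGroup G] : AddSubgroup G :=
  (n • AddMonoidHom.id G).range

/-- An abelian group is `w`-divisible if `|nG| = |G|` for every positive integer `n`. -/
def WDivisible (G : Type) [AddCommGroup G] : Prop :=
  ∀ n : ℕ, 0 < n → Cardinal.mk ↥(nsmulRange n G) = Cardinal.mk G

/-- An abelian group is strongly unbounded if it contains an internal direct sum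
`⊕_{i ∈ I} A_i` of subgroups with `|I| = |G|` and each `A_i` unbounded
(of infinite exponent). -/
def StronglyUnbounded (G : Type) [AddCommGroup G] : Prop :=
  ∃ (I : Type) (A : I → AddSubgroup G), Cardinal.mk I = Cardinal.mk G ∧
    iSupIndep A ∧ ∀ i, ∀ n : ℕ, 0 < n → ∃ a ∈ A i, n • a ≠ 0

lemma mem_nsmulRange {G : Type} [AddCommGroup G] {m : ℕ} {x : G} :
    x ∈ nsmulRange m G ↔ ∃ y, m • y = x := by
  simp [nsmulRange, AddMonoidHom.mem_range]

lemma nsmulRange_mono {G : Type} [AddCommGroup G] {m M : ℕ} (h : m ∣ M) :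
    nsmulRange M G ≤ nsmulRange m G := by
  obtain ⟨k, rfl⟩ := h
  intro x hx
  obtain ⟨y, rfl⟩ := mem_nsmulRange.mp hx
  exact mem_nsmulRange.mpr ⟨k • y, by rw [← smul_assoc]; rfl⟩

lemma mk_nsmulRange_le {G : Type} [AddCommGroup G] (m : ℕ) :
    Cardinal.mk ↥(nsmulRange m G) ≤ Cardinal.mk G :=
  Cardinal.mk_subtype_le _

lemma mk_nsmulRange_mono {G : Type} [AddCommGroup G] {m M : ℕ} (h : m ∣ M) :
    Cardinal.mk ↥(nsmulRange M G) ≤ Cardinal.mk ↥(nsmulRange m G) :=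
  Cardinal.mk_le_mk_of_subset (nsmulRange_mono h)

/-- `m (Π G i)` is in bijection with `Π (m (G i))`. -/
def nsmulRangePiEquiv (m : ℕ) {ι : Type} (G : ι → Type) [∀ i, AddCommGroup (G i)] :
    ↥(nsmulRange m (∀ i, G i)) ≃ ∀ i, ↥(nsmulRange m (G i)) where
  toFun x i := ⟨x.1 i, by
    obtain ⟨y, hy⟩ := mem_nsmulRange.mp x.2
    exact mem_nsmulRange.mpr ⟨y i, by rw [← hy]; rfl⟩⟩
  invFun f := ⟨fun i => (f i).1, by
    choose y hy using fun i => mem_nsmulRange.mp (f i).2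
    exact mem_nsmulRange.mpr ⟨y, funext hy⟩⟩
  left_inv x := rfl
  right_inv f := rfl

/-- A finite product of types, each of cardinality less than an infinite cardinal `P`,
has cardinality less than `P`. -/
lemma mk_pi_lt_of_lt : ∀ (k : ℕ) (α : Fin k → Type) {P : Cardinal}, Cardinal.aleph0 ≤ P →
    (∀ j, Cardinal.mk (α j) < P) → Cardinal.mk (∀ j, α j) < P := by
  intro k
  induction k with
  | zero =>
    intro α P hP _
    have : Cardinal.mk (∀ j : Fin 0, α j) = 1 := by
      rw [Cardinal.eq_one_iff_unique]
      exact ⟨inferInstance, inferInstance⟩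
    rw [this]
    exact lt_of_lt_of_le Cardinal.one_lt_aleph0 hP
  | succ k ih =>
    intro α P hP h
    have e : (α 0 × ∀ j : Fin k, α j.succ) ≃ ∀ j, α j := Fin.consEquiv α
    rw [← Cardinal.mk_congr e]
    have h1 : Cardinal.mk (α 0 × ∀ j : Fin k, α j.succ) =
        Cardinal.mk (α 0) * Cardinal.mk (∀ j : Fin k, α j.succ) := by
      simpa using Cardinal.mk_prod (α 0) (∀ j : Fin k, α j.succ)
    rw [h1]
    exact Cardinal.mul_lt_of_lt hP (h 0) (ih _ hP fun j => h j.succ)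

lemma mk_le_mk_pi {n : ℕ} (G : Fin n → Type) [∀ i, AddCommGroup (G i)] (i : Fin n) :
    Cardinal.mk (G i) ≤ Cardinal.mk (∀ j, G j) :=
  Cardinal.mk_le_of_injective (Pi.single_injective (M := G) i)

/-- A finite direct sum `G = G₁ ⊕ ⋯ ⊕ Gₙ` of abelian groups is `w`-divisible if and only if
there is an index `i` with `|Gᵢ| = |G|` and `Gᵢ` `w`-divisible. -/
theorem wDivisible_pi_iff (n : ℕ) (hn : 0 < n)
    (G : Fin n → Type) [∀ i, AddCommGroup (G i)] :
    WDivisible (∀ i, G i) ↔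
      ∃ i, Cardinal.mk (G i) = Cardinal.mk (∀ j, G j) ∧ WDivisible (G i) := by
  set P := Cardinal.mk (∀ j, G j) with hPdef
  constructor
  · intro hw
    by_cases hP : Cardinal.aleph0 ≤ P
    · -- infinite case
      by_contra hc
      push_neg at hc
      have key : ∀ j, ∃ m : ℕ, 0 < m ∧ Cardinal.mk ↥(nsmulRange m (G j)) < P := by
        intro j
        rcases lt_or_eq_of_le (mk_le_mk_pi G j) with hlt | heq
        · exact ⟨1, one_pos, lt_of_le_of_lt (mk_nsmulRange_le 1) hlt⟩
        · have := hc j heq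
          simp only [WDivisible, not_forall] at this
          obtain ⟨m, hm, hne⟩ := this
          refine ⟨m, hm, ?_⟩
          rw [heq] at hne
          exact lt_of_le_of_ne (le_trans (mk_nsmulRange_le m) heq.le) hne
      choose m hmpos hmlt using key
      set M : ℕ := ∏ j, m j with hMdef
      have hMpos : 0 < M := Finset.prod_pos fun j _ => hmpos j
      have hlt : ∀ j, Cardinal.mk ↥(nsmulRange M (G j)) < P := fun j =>
        lt_of_le_of_lt (mk_nsmulRange_mono (Finset.dvd_prod_of_mem m (Finset.mem_univ j)))
          (hmlt j)
      have h1 : Cardinal.mk (∀ j, ↥(nsmulRange M (G j))) < P :=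
        mk_pi_lt_of_lt n _ hP hlt
      have h2 : Cardinal.mk ↥(nsmulRange M (∀ i, G i)) =
          Cardinal.mk (∀ j, ↥(nsmulRange M (G j))) :=
        Cardinal.mk_congr (nsmulRangePiEquiv M G)
      rw [hw M hMpos, ← hPdef] at h2
      exact absurd (h2 ▸ h1) (lt_irrefl P)
    · -- finite case: the group must be trivial
      push_neg at hP
      haveI : Finite (∀ j, G j) := Cardinal.lt_aleph0_iff_finite.mp hP
      have hsurj : ∀ m : ℕ, 0 < m → Function.Surjective (fun x : (∀ j, G j) => m • x) := by
        intro m hm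
        have htop : nsmulRange m (∀ j, G j) = ⊤ := by
          apply AddSubgroup.eq_top_of_card_eq
          have := hw m hm
          simp only [Nat.card]; exact congrArg Cardinal.toNat this
        intro x
        have : x ∈ nsmulRange m (∀ j, G j) := htop ▸ AddSubgroup.mem_top x
        exact mem_nsmulRange.mp this
      have hsub : Subsingleton (∀ j, G j) := by
        constructor
        intro a b
        suffices hz : ∀ g : (∀ j, G j), g = 0 by rw [hz a, hz b]
        intro g
        have hk : 0 < addOrderOf g := (addOrderOf_pos g)
        have hinj : Function.Injective (fun x : (∀ j, G j) => addOrderOf g • x) :=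
          Finite.injective_iff_surjective.mpr (hsurj _ hk)
        have : addOrderOf g • g = addOrderOf g • (0 : ∀ j, G j) := by
          simp [addOrderOf_nsmul_eq_zero]
        exact hinj this
      have hsubi : ∀ j, Subsingleton (G j) := by
        intro j
        constructor
        intro a b
        exact Pi.single_injective (M := G) j (hsub.elim _ _)
      haveI := hsubi ⟨0, hn⟩
      have e1 : Cardinal.mk (G ⟨0, hn⟩) = 1 :=
        Cardinal.eq_one_iff_unique.mpr ⟨inferInstance, ⟨0⟩⟩
      have e2 : P = 1 := Cardinal.eq_one_iff_unique.mpr ⟨hsub, ⟨0⟩⟩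
      refine ⟨⟨0, hn⟩, by rw [e1, e2], ?_⟩
      intro m hm
      rw [e1]
      exact Cardinal.eq_one_iff_unique.mpr ⟨inferInstance, ⟨0⟩⟩
  · rintro ⟨i, hcard, hwd⟩
    intro m hm
    apply le_antisymm (mk_nsmulRange_le m)
    have hinj : Function.Injective
        (fun a : ↥(nsmulRange m (G i)) =>
          (⟨Pi.single i a.1, by
            obtain ⟨y, hy⟩ := mem_nsmulRange.mp a.2
            refine mem_nsmulRange.mpr ⟨Pi.single i y, ?_⟩
            rw [← hy]
            exact (map_nsmul (AddMonoidHom.single G i) m y).symm⟩ :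
            ↥(nsmulRange m (∀ j, G j)))) := by
      intro a b hab
      exact Subtype.ext (Pi.single_injective (M := G) i (congrArg Subtype.val hab))
    calc P = Cardinal.mk (G i) := hcard.symm
      _ = Cardinal.mk ↥(nsmulRange m (G i)) := (hwd m hm).symm
      _ ≤ Cardinal.mk ↥(nsmulRange m (∀ j, G j)) := Cardinal.mk_le_of_injective hinj
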